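/- For every x in D one has H(x) ≤ (∑ i, w i) * Real.log (1 + μ) − 1/(μ − ∑ i, x i); consequently, for any sequence (x^(n)) of points of D with ∑ i, x^(n) i → μ as n → ∞, H(x^(n)) → −∞. -/

import Mathlib

open Filter

/-- On `D` the potential `H` is bounded above by
`(∑ i, w i) * log (1 + μ) - 1/(μ - ∑ i, x i)`; consequently `H` tends to `-∞`
along any sequence of points of `D` whose coordinate sum tends to `μ`. -/
theorem potential_upper_bound_and_tendsto_atBot
    (N : ℕ) (hN : 0 < N) (μ r : ℝ) (hμ : 0 < μ) (hr : 0 < r)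
    (w : Fin N → ℝ) (hw : ∀ i, 0 < w i)
    (D : Set (Fin N → ℝ)) (hD : D = {x | (∀ i, x i ≥ 0) ∧ (∑ i, x i) < μ})
    (H : (Fin N → ℝ) → ℝ)
    (hH : ∀ x, H x = (∑ i, w i * Real.log (1 + x i)) - r * (∑ i, x i)
        - 1 / (μ - ∑ i, x i)) :
    (∀ x ∈ D, H x ≤ (∑ i, w i) * Real.log (1 + μ) - 1 / (μ - ∑ i, x i)) ∧
    (∀ x : ℕ → (Fin N → ℝ), (∀ n, x n ∈ D) →
      Tendsto (fun n => ∑ i, x n i) atTop (nhds μ) →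
      Tendsto (fun n => H (x n)) atTop atBot) := by
  have key : ∀ x ∈ D, H x ≤ (∑ i, w i) * Real.log (1 + μ) - 1 / (μ - ∑ i, x i) := by
    intro x hx
    rw [hD] at hx
    obtain ⟨hpos, hlt⟩ := hx
    have hsum0 : 0 ≤ ∑ i, x i := Finset.sum_nonneg fun i _ => hpos i
    have h1 : ∑ i, w i * Real.log (1 + x i) ≤ (∑ i, w i) * Real.log (1 + μ) := by
      rw [Finset.sum_mul]
      apply Finset.sum_le_sum
      intro i _
      have hxi : x i ≤ μ := by
        have : x i ≤ ∑ j, x j := Finset.single_le_sum (fun j _ => hpos j) (Finset.mem_univ i)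
        linarith
      have : Real.log (1 + x i) ≤ Real.log (1 + μ) := by
        apply Real.log_le_log (by linarith [hpos i]) (by linarith)
      exact mul_le_mul_of_nonneg_left this (hw i).le
    rw [hH]
    have h2 : 0 ≤ r * (∑ i, x i) := mul_nonneg hr.le hsum0
    linarith
  refine ⟨key, fun x hxD hts => ?_⟩
  have hlt : ∀ n, ∑ i, x n i < μ := fun n => ((hD ▸ hxD n) : _).2
  have htop : Tendsto (fun n => 1 / (μ - ∑ i, x n i)) atTop atTop := by
    have h0 : Tendsto (fun n => μ - ∑ i, x n i) atTop (nhdsWithin 0 (Set.Ioi 0)) := by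
      apply tendsto_nhdsWithin_of_tendsto_nhds_of_eventually_within
      · have := hts.const_sub μ
        simpa using this
      · exact Eventually.of_forall fun n => by simp [sub_pos.mpr (hlt n)]
    simpa [one_div, Pi.inv_def] using h0.inv_tendsto_nhdsGT_zero
  have : Tendsto (fun n => (∑ i, w i) * Real.log (1 + μ) - 1 / (μ - ∑ i, x n i)) atTop atBot :=
    tendsto_atBot_add_const_left _ _ (tendsto_neg_atBot_iff.mpr htop)
  refine tendsto_atBot_mono (fun n => key (x n) (hxD n)) this
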